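/- Let n ≥ 5 and G = C⃗₅^{1,2} (n = 5, S = {1,2}). For each m ≥ 1 and each a ∈ ℤ/5ℤ, the chains αₐ^{(m)} = e_{a,a+1,…,a+m} and βₐ^{(m)} = Σ_{j=1}^{m} (−1)^{m−j} e_{a,a+1,…,a+j−1,a+j+1,…,a+m+1} both lie in Ωₘ(G), i.e., they are allowed chains whose boundaries contain no illegal faces. -/
import Mathlib


/-- The GLMY boundary: `bdry V K m` maps the free `K`-space on paths with `m+2` vertices to
the free `K`-space on paths with `m+1` vertices, by the alternating sum of vertex deletions. -/
noncomputable def bdry (V : Type) (K : Type) [Field K] (m : ℕ) :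
    ((Fin (m + 2) → V) →₀ K) →ₗ[K] ((Fin (m + 1) → V) →₀ K) :=
  Finsupp.lsum K fun p =>
    ∑ j : Fin (m + 2), ((-1 : K) ^ (j : ℕ)) • Finsupp.lsingle (fun i => p (j.succAbove i))

/-- `αₐ^{(m)} = e_{a,a+1,…,a+m}` in `C⃗₅^{1,2}`. -/
noncomputable def alphaChain (K : Type) [Field K] (m : ℕ) (a : ZMod 5) :
    (Fin (m + 1) → ZMod 5) →₀ K :=
  Finsupp.single (fun i : Fin (m + 1) => a + ((i : ℕ) : ZMod 5)) 1

/-- `βₐ^{(m)} = Σ_{j=1}^{m} (−1)^{m−j} e_{a,a+1,…,a+j−1,a+j+1,…,a+m+1}` in `C⃗₅^{1,2}`. -/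
noncomputable def betaChain (K : Type) [Field K] (m : ℕ) (a : ZMod 5) :
    (Fin (m + 1) → ZMod 5) →₀ K :=
  ∑ j ∈ Finset.Icc 1 m, ((-1 : K) ^ (m - j)) •
    Finsupp.single
      (fun i : Fin (m + 1) =>
        if (i : ℕ) < j then a + ((i : ℕ) : ZMod 5) else a + ((i : ℕ) : ZMod 5) + 1) 1

lemma val_succAbove {n : ℕ} (k : Fin (n+1)) (i : Fin n) :
    ((k.succAbove i : Fin (n+1)) : ℕ) = if (i:ℕ) < (k:ℕ) then (i:ℕ) else (i:ℕ)+1 := by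
  rw [Fin.succAbove]
  split_ifs with h1 h2 h3 <;> simp_all [Fin.lt_def]

lemma bdry_single_apply (m : ℕ) (K : Type) [Field K] (p : Fin (m + 2) → ZMod 5) (c : K)
    (q : Fin (m + 1) → ZMod 5) :
    bdry (ZMod 5) K m (Finsupp.single p c) q
      = ∑ j : Fin (m + 2), (-1 : K) ^ (j : ℕ) * (if (fun i => p (j.succAbove i)) = q then c else 0) := by
  classical
  simp [bdry, Finsupp.lsum_single, LinearMap.sum_apply, LinearMap.smul_apply,
    Finsupp.lsingle_apply, Finsupp.finset_sum_apply, Finsupp.smul_apply, Finsupp.single_apply,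
    smul_eq_mul]
  exact Finset.sum_congr rfl fun x _ => by split_ifs <;> simp

lemma alpha_key (m : ℕ) (a : ZMod 5) (k : Fin (m+2)) (q : Fin (m+1) → ZMod 5) (i₀ : Fin m)
    (hq : q i₀.succ - q i₀.castSucc ∉ ({1,2} : Set (ZMod 5)))
    (hface : (fun i : Fin (m+1) => a + (((k.succAbove i : Fin (m+2)) : ℕ) : ZMod 5)) = q) :
    False := by
  have h1 : a + (((k.succAbove i₀.succ : Fin (m+2)) : ℕ) : ZMod 5) = q i₀.succ :=
    congrFun hface i₀.succ
  have h0 : a + (((k.succAbove i₀.castSucc : Fin (m+2)) : ℕ) : ZMod 5) = q i₀.castSucc :=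
    congrFun hface i₀.castSucc
  rw [← h1, ← h0, val_succAbove, val_succAbove] at hq
  simp only [Fin.val_succ, Fin.coe_castSucc] at hq
  apply hq
  simp only [Set.mem_insert_iff, Set.mem_singleton_iff]
  rcases Nat.lt_or_ge ((i₀:ℕ)+1) (k:ℕ) with hk | hk
  · rw [if_pos hk, if_pos (show (i₀:ℕ) < (k:ℕ) by omega)]
    left; push_cast; ring
  · rw [if_neg (show ¬ ((i₀:ℕ)+1 < (k:ℕ)) by omega)]
    rcases Nat.lt_or_ge (i₀:ℕ) (k:ℕ) with hk2 | hk2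
    · rw [if_pos hk2]; right; push_cast; ring
    · rw [if_neg (show ¬ ((i₀:ℕ) < (k:ℕ)) by omega)]; left; push_cast; ring

lemma beta_key (m : ℕ) (a : ZMod 5) (j : ℕ) (k : Fin (m+2)) (q : Fin (m+1) → ZMod 5) (i₀ : Fin m)
    (hq : q i₀.succ - q i₀.castSucc ∉ ({1,2} : Set (ZMod 5)))
    (hface : (fun i : Fin (m+1) =>
        if ((k.succAbove i : Fin (m+2)) : ℕ) < j then a + (((k.succAbove i : Fin (m+2)) : ℕ) : ZMod 5)
        else a + (((k.succAbove i : Fin (m+2)) : ℕ) : ZMod 5) + 1) = q) :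
    (k:ℕ) = (i₀:ℕ)+1 ∧ (j = (i₀:ℕ)+1 ∨ j = (i₀:ℕ)+2) := by
  have h1 : (if ((k.succAbove i₀.succ : Fin (m+2)) : ℕ) < j
        then a + (((k.succAbove i₀.succ : Fin (m+2)) : ℕ) : ZMod 5)
        else a + (((k.succAbove i₀.succ : Fin (m+2)) : ℕ) : ZMod 5) + 1) = q i₀.succ :=
    congrFun hface i₀.succ
  have h0 : (if ((k.succAbove i₀.castSucc : Fin (m+2)) : ℕ) < j
        then a + (((k.succAbove i₀.castSucc : Fin (m+2)) : ℕ) : ZMod 5)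
        else a + (((k.succAbove i₀.castSucc : Fin (m+2)) : ℕ) : ZMod 5) + 1) = q i₀.castSucc :=
    congrFun hface i₀.castSucc
  rw [← h1, ← h0, val_succAbove, val_succAbove] at hq
  simp only [Fin.val_succ, Fin.coe_castSucc] at hq
  rcases Nat.lt_or_ge ((i₀:ℕ)+1) (k:ℕ) with hk | hk
  · exfalso; apply hq
    rw [if_pos hk, if_pos (show (i₀:ℕ) < (k:ℕ) by omega)]
    simp only [Set.mem_insert_iff, Set.mem_singleton_iff]
    by_cases h2 : (i₀:ℕ)+1 < j
    · rw [if_pos h2, if_pos (show (i₀:ℕ) < j by omega)]; left; push_cast; ring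
    · rw [if_neg h2]
      by_cases h3 : (i₀:ℕ) < j
      · rw [if_pos h3]; right; push_cast; ring
      · rw [if_neg h3]; left; push_cast; ring
  · rw [if_neg (show ¬ ((i₀:ℕ)+1 < (k:ℕ)) by omega)] at hq
    rcases Nat.lt_or_ge (i₀:ℕ) (k:ℕ) with hk2 | hk2
    · -- k = i₀ + 1
      rw [if_pos hk2] at hq
      by_cases h2 : (i₀:ℕ)+1+1 < j
      · exfalso; apply hq
        rw [if_pos h2, if_pos (show (i₀:ℕ) < j by omega)]
        simp only [Set.mem_insert_iff, Set.mem_singleton_iff]; right; push_cast; ring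
      · by_cases h3 : (i₀:ℕ) < j
        · exact ⟨by omega, by omega⟩
        · exfalso; apply hq
          rw [if_neg h2, if_neg h3]
          simp only [Set.mem_insert_iff, Set.mem_singleton_iff]; right; push_cast; ring
    · exfalso; apply hq
      rw [if_neg (show ¬ ((i₀:ℕ) < (k:ℕ)) by omega)]
      simp only [Set.mem_insert_iff, Set.mem_singleton_iff]
      by_cases h2 : (i₀:ℕ)+1+1 < j
      · rw [if_pos h2, if_pos (show (i₀:ℕ)+1 < j by omega)]; left; push_cast; ring
      · rw [if_neg h2]
        by_cases h3 : (i₀:ℕ)+1 < j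
        · rw [if_pos h3]; right; push_cast; ring
        · rw [if_neg h3]; left; push_cast; ring

/-- For every `m ≥ 1` (written `m + 1`) and `a ∈ ℤ/5ℤ`, the chains `αₐ^{(m)}` and `βₐ^{(m)}`
lie in `Ωₘ(C⃗₅^{1,2})`: they are supported on allowed paths (all steps in `{1,2}`), and their
boundaries have no illegal faces (coefficients of non-allowed paths vanish). -/
theorem alpha_beta_in_Omega (K : Type) [Field K] [CharZero K] (m : ℕ) (a : ZMod 5) :
    (∀ p ∈ (alphaChain K (m + 1) a).support,
        ∀ i : Fin (m + 1), p i.succ - p i.castSucc ∈ ({1, 2} : Set (ZMod 5))) ∧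
    (∀ p ∈ (betaChain K (m + 1) a).support,
        ∀ i : Fin (m + 1), p i.succ - p i.castSucc ∈ ({1, 2} : Set (ZMod 5))) ∧
    (∀ q : Fin (m + 1) → ZMod 5,
        (¬ ∀ i : Fin m, q i.succ - q i.castSucc ∈ ({1, 2} : Set (ZMod 5))) →
        bdry (ZMod 5) K m (alphaChain K (m + 1) a) q = 0) ∧
    (∀ q : Fin (m + 1) → ZMod 5,
        (¬ ∀ i : Fin m, q i.succ - q i.castSucc ∈ ({1, 2} : Set (ZMod 5))) →
        bdry (ZMod 5) K m (betaChain K (m + 1) a) q = 0) := by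
  refine ⟨?_, ?_, ?_, ?_⟩
  · -- alpha allowed
    intro p hp i
    rw [alphaChain] at hp
    have hp' := Finset.mem_singleton.mp (Finsupp.support_single_subset hp)
    subst hp'
    simp only [Set.mem_insert_iff, Set.mem_singleton_iff, Fin.val_succ, Fin.coe_castSucc]
    left; push_cast; ring
  · -- beta allowed
    intro p hp i
    rw [betaChain] at hp
    obtain ⟨j, hj, hpj⟩ := Finsupp.mem_support_finset_sum p hp
    have hp' := Finset.mem_singleton.mp (Finsupp.support_single_subset (Finsupp.support_smul hpj))
    subst hp'
    simp only [Set.mem_insert_iff, Set.mem_singleton_iff, Fin.val_succ, Fin.coe_castSucc]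
    by_cases h2 : (i:ℕ)+1 < j
    · rw [if_pos h2, if_pos (show (i:ℕ) < j by omega)]; left; push_cast; ring
    · rw [if_neg h2]
      by_cases h3 : (i:ℕ) < j
      · rw [if_pos h3]; right; push_cast; ring
      · rw [if_neg h3]; left; push_cast; ring
  · -- alpha boundary
    intro q hq
    push_neg at hq
    obtain ⟨i₀, hbad⟩ := hq
    rw [alphaChain, bdry_single_apply]
    apply Finset.sum_eq_zero
    intro k _
    rw [if_neg, mul_zero]
    intro hface
    exact alpha_key m a k q i₀ hbad hface
  · -- beta boundary
    intro q hq
    push_neg at hq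
    obtain ⟨i₀, hbad⟩ := hq
    rw [betaChain, map_sum, Finsupp.finset_sum_apply]
    simp only [map_smul, Finsupp.smul_apply, bdry_single_apply, smul_eq_mul]
    have hum : (i₀:ℕ) < m := i₀.isLt
    have hsub : ({(i₀:ℕ)+1, (i₀:ℕ)+2} : Finset ℕ) ⊆ Finset.Icc 1 (m+1) := by
      intro x hx
      simp only [Finset.mem_insert, Finset.mem_singleton] at hx
      rcases hx with h | h <;> · subst h; simp only [Finset.mem_Icc]; omega
    rw [← Finset.sum_subset hsub (fun j hj hnj => by
      simp only [Finset.mem_insert, Finset.mem_singleton] at hnj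
      push_neg at hnj
      have hz : (∑ k : Fin (m+2), (-1:K)^(k:ℕ) *
          (if (fun i => if ((k.succAbove i : Fin (m+2)):ℕ) < j
              then a + (((k.succAbove i : Fin (m+2)):ℕ):ZMod 5)
              else a + (((k.succAbove i : Fin (m+2)):ℕ):ZMod 5) + 1) = q then (1:K) else 0)) = 0 := by
        apply Finset.sum_eq_zero
        intro k _
        rw [if_neg, mul_zero]
        intro hface
        rcases (beta_key m a j k q i₀ hbad hface).2 with h | h <;> omega
      rw [hz, mul_zero])]
    rw [Finset.sum_pair (show (i₀:ℕ)+1 ≠ (i₀:ℕ)+2 by omega)]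
    have k₀ : Fin (m+2) := ⟨(i₀:ℕ)+1, by omega⟩
    have inner : ∀ j : ℕ, (∑ k : Fin (m+2), (-1:K)^(k:ℕ) *
        (if (fun i => if ((k.succAbove i : Fin (m+2)):ℕ) < j
            then a + (((k.succAbove i : Fin (m+2)):ℕ):ZMod 5)
            else a + (((k.succAbove i : Fin (m+2)):ℕ):ZMod 5) + 1) = q then (1:K) else 0))
        = (-1:K)^((i₀:ℕ)+1) *
          (if (fun i : Fin (m+1) => if (((⟨(i₀:ℕ)+1, by omega⟩ : Fin (m+2)).succAbove i :
              Fin (m+2)):ℕ) < j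
            then a + ((((⟨(i₀:ℕ)+1, by omega⟩ : Fin (m+2)).succAbove i : Fin (m+2)):ℕ):ZMod 5)
            else a + ((((⟨(i₀:ℕ)+1, by omega⟩ : Fin (m+2)).succAbove i : Fin (m+2)):ℕ):ZMod 5) + 1)
              = q then (1:K) else 0) := by
      intro j
      rw [Finset.sum_eq_single (⟨(i₀:ℕ)+1, by omega⟩ : Fin (m+2))]
      · intro b _ hb
        rw [if_neg, mul_zero]
        intro hface
        exact hb (Fin.ext ((beta_key m a j b q i₀ hbad hface).1))
      · intro h
        exact absurd (Finset.mem_univ _) h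
    rw [inner ((i₀:ℕ)+1), inner ((i₀:ℕ)+2)]
    have hface_eq : (fun i : Fin (m+1) => if (((⟨(i₀:ℕ)+1, by omega⟩ : Fin (m+2)).succAbove i :
          Fin (m+2)):ℕ) < (i₀:ℕ)+1
        then a + ((((⟨(i₀:ℕ)+1, by omega⟩ : Fin (m+2)).succAbove i : Fin (m+2)):ℕ):ZMod 5)
        else a + ((((⟨(i₀:ℕ)+1, by omega⟩ : Fin (m+2)).succAbove i : Fin (m+2)):ℕ):ZMod 5) + 1)
        = (fun i : Fin (m+1) => if (((⟨(i₀:ℕ)+1, by omega⟩ : Fin (m+2)).succAbove i :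
          Fin (m+2)):ℕ) < (i₀:ℕ)+2
        then a + ((((⟨(i₀:ℕ)+1, by omega⟩ : Fin (m+2)).succAbove i : Fin (m+2)):ℕ):ZMod 5)
        else a + ((((⟨(i₀:ℕ)+1, by omega⟩ : Fin (m+2)).succAbove i : Fin (m+2)):ℕ):ZMod 5) + 1) := by
      funext i
      rw [val_succAbove]
      by_cases h : (i:ℕ) < (i₀:ℕ)+1
      · rw [if_pos h, if_pos (show (i:ℕ) < (i₀:ℕ)+1 from h),
          if_pos (show (i:ℕ) < (i₀:ℕ)+2 by omega)]
      · rw [if_neg h, if_neg (show ¬ ((i:ℕ)+1 < (i₀:ℕ)+1) by omega),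
          if_neg (show ¬ ((i:ℕ)+1 < (i₀:ℕ)+2) by omega)]
    rw [hface_eq]
    have e1 : m+1-((i₀:ℕ)+1) = (m-(i₀:ℕ)-1)+1 := by omega
    have e2 : m+1-((i₀:ℕ)+2) = m-(i₀:ℕ)-1 := by omega
    rw [e1, e2, pow_succ]
    ring
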